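/- For f ∈ S(ℝ²), the quantity ⟨f_Ω, f⟩ (dual pairing of the tempered distribution f_Ω against f) equals ∫₀^{2π} |f̂(Ω cos φ, Ω sin φ)|² dφ; in particular it is nonnegative and defines a seminorm f ↦ ⟨f_Ω, f⟩^{1/2} on S(ℝ²). -/

import Mathlib

noncomputable section
open MeasureTheory

/-- j₀(s) = ∫₀^{2π} e^{i s cos φ} dφ. -/
def j0 (s : ℂ) : ℂ := ∫ φ in (0:ℝ)..(2 * Real.pi), Complex.exp (Complex.I * s * Complex.cos (φ : ℂ))

/-- Unitary Fourier transform on ℝ². -/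
def FT (f : ℝ × ℝ → ℂ) (k : ℝ × ℝ) : ℂ :=
  (2 * Real.pi : ℂ)⁻¹ * ∫ x : ℝ × ℝ, Complex.exp (-Complex.I * ((k.1 * x.1 + k.2 * x.2 : ℝ) : ℂ)) * f x

/-- f_Ω(x) = (2π)⁻² (f * j₀(Ω|·|))(x). -/
def projOmega (Ω : ℝ) (f : ℝ × ℝ → ℂ) (x : ℝ × ℝ) : ℂ :=
  (2 * Real.pi : ℂ) ^ (-2 : ℤ) *
    ∫ y : ℝ × ℝ, f y * j0 ((Ω * Real.sqrt ((x.1 - y.1) ^ 2 + (x.2 - y.2) ^ 2) : ℝ) : ℂ)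

lemma j0_rot (a b : ℝ) :
    (∫ φ in (0:ℝ)..(2 * Real.pi), Complex.exp (Complex.I * ((a * Real.cos φ + b * Real.sin φ : ℝ) : ℂ)))
      = j0 ((Real.sqrt (a ^ 2 + b ^ 2) : ℝ) : ℂ) := by
  set z : ℂ := (a : ℂ) + (b : ℂ) * Complex.I with hz
  have hr : Real.sqrt (a ^ 2 + b ^ 2) = ‖z‖ := by
    rw [Complex.norm_def, Complex.normSq_add_mul_I]
  have ha : ‖z‖ * Real.cos z.arg = a := by
    rw [Complex.norm_mul_cos_arg]; simp [hz]
  have hb : ‖z‖ * Real.sin z.arg = b := by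
    rw [Complex.norm_mul_sin_arg]; simp [hz]
  set r := ‖z‖
  set θ := z.arg
  have key : ∀ φ : ℝ, a * Real.cos φ + b * Real.sin φ = r * Real.cos (φ - θ) := by
    intro φ
    rw [← ha, ← hb, Real.cos_sub]; ring
  have h1 : (∫ φ in (0:ℝ)..(2 * Real.pi), Complex.exp (Complex.I * ((a * Real.cos φ + b * Real.sin φ : ℝ) : ℂ)))
      = ∫ φ in (0:ℝ)..(2 * Real.pi), (fun t => Complex.exp (Complex.I * ((r * Real.cos t : ℝ) : ℂ))) (φ - θ) := by
    congr 1; ext φ; rw [key φ]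
  rw [h1, intervalIntegral.integral_comp_sub_right (fun t => Complex.exp (Complex.I * ((r * Real.cos t : ℝ) : ℂ))) θ]
  have hper : Function.Periodic (fun t => Complex.exp (Complex.I * ((r * Real.cos t : ℝ) : ℂ))) (2 * Real.pi) := by
    intro t; simp [Real.cos_add_two_pi]
  have := hper.intervalIntegral_add_eq (-θ) 0
  rw [show (0:ℝ) - θ = -θ by ring, show 2 * Real.pi - θ = -θ + 2 * Real.pi by ring, this]
  rw [zero_add, j0]
  congr 1; ext φ
  rw [hr, Complex.ofReal_mul, Complex.ofReal_cos, mul_assoc]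

lemma j0_conj (s : ℝ) (hs : 0 ≤ s) : (starRingEnd ℂ) (j0 (s : ℂ)) = j0 (s : ℂ) := by
  have h02 : (0:ℝ) ≤ 2 * Real.pi := by positivity
  have h1 : (starRingEnd ℂ) (j0 (s : ℂ))
      = ∫ φ in (0:ℝ)..(2 * Real.pi), Complex.exp (Complex.I * (((-s) * Real.cos φ + 0 * Real.sin φ : ℝ) : ℂ)) := by
    rw [j0, intervalIntegral.integral_of_le h02, ← integral_conj,
      intervalIntegral.integral_of_le h02]
    congr 1; ext φ
    rw [← Complex.exp_conj]
    congr 1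
    simp [← Complex.ofReal_cos]
    ring
  rw [h1, j0_rot]
  have hss : Real.sqrt ((-s) ^ 2 + 0 ^ 2) = s := by
    rw [show (-s) ^ 2 + 0 ^ 2 = s ^ 2 by ring, Real.sqrt_sq hs]
  rw [hss]

lemma kernel_eq (Ω : ℝ) (hΩ : 0 < Ω) (u₁ u₂ : ℝ) :
    (starRingEnd ℂ) (j0 ((Ω * Real.sqrt (u₁ ^ 2 + u₂ ^ 2) : ℝ) : ℂ))
      = ∫ φ in (0:ℝ)..(2 * Real.pi),
          Complex.exp (-Complex.I * ((Ω * Real.cos φ * u₁ + Ω * Real.sin φ * u₂ : ℝ) : ℂ)) := by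
  have hs : 0 ≤ Ω * Real.sqrt (u₁ ^ 2 + u₂ ^ 2) := by positivity
  rw [j0_conj _ hs]
  have h2 : ∀ φ : ℝ, Complex.exp (-Complex.I * ((Ω * Real.cos φ * u₁ + Ω * Real.sin φ * u₂ : ℝ) : ℂ))
      = Complex.exp (Complex.I * (((-(Ω * u₁)) * Real.cos φ + (-(Ω * u₂)) * Real.sin φ : ℝ) : ℂ)) := by
    intro φ; congr 1; push_cast; ring
  rw [intervalIntegral.integral_congr (fun φ _ => h2 φ), j0_rot]
  congr 2
  rw [show (-(Ω * u₁)) ^ 2 + (-(Ω * u₂)) ^ 2 = Ω ^ 2 * (u₁ ^ 2 + u₂ ^ 2) by ring,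
    Real.sqrt_mul (sq_nonneg Ω), Real.sqrt_sq hΩ.le]

/-- The plane-wave kernel. -/
def eker (k x : ℝ × ℝ) : ℂ := Complex.exp (-Complex.I * ((k.1 * x.1 + k.2 * x.2 : ℝ) : ℂ))

lemma eker_norm (k x : ℝ × ℝ) : ‖eker k x‖ = 1 := by
  rw [eker, Complex.norm_exp]
  simp

lemma eker_continuous : Continuous fun p : (ℝ × ℝ) × (ℝ × ℝ) => eker p.1 p.2 := by
  unfold eker
  fun_prop

lemma eker_cont2 {α} [TopologicalSpace α] {g h : α → ℝ × ℝ} (hg : Continuous g)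
    (hh : Continuous h) : Continuous fun a => eker (g a) (h a) := by
  unfold eker; fun_prop

/-- ⟨f_Ω, f⟩ equals the L²(S¹)-norm squared of f̂ restricted to the circle of radius Ω;
in particular it is nonnegative, so f ↦ ⟨f_Ω, f⟩^{1/2} is a seminorm on S(ℝ²). -/
theorem pairing_fOmega_f (Ω : ℝ) (hΩ : 0 < Ω) (f : SchwartzMap (ℝ × ℝ) ℂ) :
    (∫ x : ℝ × ℝ, (starRingEnd ℂ) (projOmega Ω (fun y => f y) x) * f x)
      = ((∫ φ in (0:ℝ)..(2 * Real.pi),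
          ‖FT (fun y => f y) (Ω * Real.cos φ, Ω * Real.sin φ)‖ ^ 2 : ℝ) : ℂ) ∧
    0 ≤ (∫ φ in (0:ℝ)..(2 * Real.pi),
          ‖FT (fun y => f y) (Ω * Real.cos φ, Ω * Real.sin φ)‖ ^ 2 : ℝ) := by
  have h02 : (0:ℝ) ≤ 2 * Real.pi := by positivity
  set ν : Measure ℝ := volume.restrict (Set.Ioc (0:ℝ) (2 * Real.pi)) with hν
  haveI : IsFiniteMeasure ν := by
    constructor
    rw [hν, Measure.restrict_apply MeasurableSet.univ, Set.univ_inter, Real.volume_Ioc]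
    exact ENNReal.ofReal_lt_top
  have hν1 : Integrable (fun _ : ℝ => (1:ℝ)) ν := integrable_const 1
  have hfc : Continuous (fun y => (f y : ℂ)) := f.continuous
  have hfi : Integrable (fun y => (f y : ℂ)) volume := f.integrable
  set K : ℝ → ℝ × ℝ := fun φ => (Ω * Real.cos φ, Ω * Real.sin φ) with hK
  have hKcont : Continuous K := by rw [hK]; fun_prop
  set Ifun : ℝ × ℝ → ℂ := fun k => ∫ x : ℝ × ℝ, eker k x * f x with hIfun
  set C : ℝ := ∫ x : ℝ × ℝ, ‖f x‖ with hC
  have hIbound : ∀ k, ‖Ifun k‖ ≤ C := by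
    intro k
    calc ‖Ifun k‖ ≤ ∫ x : ℝ × ℝ, ‖eker k x * f x‖ := norm_integral_le_integral_norm _
    _ = C := by rw [hC]; congr 1; ext x; rw [norm_mul, eker_norm, one_mul]
  have hIcont : Continuous Ifun := by
    rw [hIfun]
    apply continuous_of_dominated (bound := fun x : ℝ × ℝ => ‖f x‖)
    · intro k
      exact ((eker_continuous.comp (Continuous.prodMk_right k)).mul hfc).aestronglyMeasurable
    · intro k
      filter_upwards with x
      rw [norm_mul, eker_norm, one_mul]
    · exact hfi.norm
    · filter_upwards with x
      exact (eker_continuous.comp (continuous_id.prodMk continuous_const)).mul continuous_const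
  set c : ℂ := (2 * Real.pi : ℂ) ^ (-2 : ℤ) with hc
  -- Step 1 : conjugate of projOmega
  have step1 : ∀ x : ℝ × ℝ, (starRingEnd ℂ) (projOmega Ω (fun y => f y) x)
      = c * ∫ y : ℝ × ℝ, (starRingEnd ℂ) (f y) *
          (∫ φ in Set.Ioc (0:ℝ) (2 * Real.pi), eker (K φ) x * (starRingEnd ℂ) (eker (K φ) y)) := by
    intro x
    rw [projOmega, map_mul, ← integral_conj]
    congr 1
    · rw [hc]
      simp [map_zpow₀, map_mul, Complex.conj_ofReal, map_ofNat]
    · congr 1; ext y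
      rw [map_mul]
      congr 1
      rw [kernel_eq Ω hΩ, intervalIntegral.integral_of_le h02]
      congr 1; ext φ
      rw [hK]
      show Complex.exp _ = eker (Ω * Real.cos φ, Ω * Real.sin φ) x * (starRingEnd ℂ) (eker (Ω * Real.cos φ, Ω * Real.sin φ) y)
      rw [eker, eker, ← Complex.exp_conj, ← Complex.exp_add]
      congr 1
      simp only [map_mul, Complex.conj_I, Complex.conj_ofReal, map_neg]
      push_cast; ring
  -- integrability for inner swap (fixed x)
  have hint1 : ∀ x : ℝ × ℝ, Integrable
      (Function.uncurry fun (y : ℝ × ℝ) (φ : ℝ) =>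
        (starRingEnd ℂ) (f y) * (eker (K φ) x * (starRingEnd ℂ) (eker (K φ) y)))
      (volume.prod ν) := by
    intro x
    apply Integrable.mono' (hfi.norm.mul_prod hν1)
    · apply Continuous.aestronglyMeasurable
      simp only [starRingEnd_apply]
      have h1 : Continuous fun p : (ℝ × ℝ) × ℝ => eker (K p.2) x :=
        eker_cont2 (hKcont.comp continuous_snd) continuous_const
      have h2 : Continuous fun p : (ℝ × ℝ) × ℝ => eker (K p.2) p.1 :=
        eker_cont2 (hKcont.comp continuous_snd) continuous_fst
      fun_prop
    · filter_upwards with p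
      rw [Function.uncurry]
      simp only [norm_mul, RCLike.norm_conj, eker_norm, one_mul, mul_one]
      exact le_refl _
  -- inner rearrangement
  have inner_eq : ∀ x : ℝ × ℝ,
      (∫ y : ℝ × ℝ, (starRingEnd ℂ) (f y) *
          (∫ φ in Set.Ioc (0:ℝ) (2 * Real.pi), eker (K φ) x * (starRingEnd ℂ) (eker (K φ) y)))
      = ∫ φ in Set.Ioc (0:ℝ) (2 * Real.pi), eker (K φ) x * (starRingEnd ℂ) (Ifun (K φ)) := by
    intro x
    have e1 : (fun y : ℝ × ℝ => (starRingEnd ℂ) (f y) *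
          (∫ φ in Set.Ioc (0:ℝ) (2 * Real.pi), eker (K φ) x * (starRingEnd ℂ) (eker (K φ) y)))
        = fun y : ℝ × ℝ => ∫ φ in Set.Ioc (0:ℝ) (2 * Real.pi),
            (starRingEnd ℂ) (f y) * (eker (K φ) x * (starRingEnd ℂ) (eker (K φ) y)) :=
      funext fun y => (integral_const_mul _ _).symm
    rw [e1, integral_integral_swap (hint1 x)]
    congr 1; ext φ
    have e2 : (fun y : ℝ × ℝ => (starRingEnd ℂ) (f y) * (eker (K φ) x * (starRingEnd ℂ) (eker (K φ) y)))
        = fun y : ℝ × ℝ => eker (K φ) x * (starRingEnd ℂ) (eker (K φ) y * f y) := by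
      ext y; rw [map_mul]; ring
    rw [e2, integral_const_mul, ← integral_conj]
  -- integrability for outer swap
  have hint2 : Integrable
      (Function.uncurry fun (x : ℝ × ℝ) (φ : ℝ) =>
        f x * eker (K φ) x * (starRingEnd ℂ) (Ifun (K φ)))
      (volume.prod ν) := by
    apply Integrable.mono' (hfi.norm.mul_prod (integrable_const C))
    · apply Continuous.aestronglyMeasurable
      simp only [starRingEnd_apply]
      have h2 : Continuous fun p : (ℝ × ℝ) × ℝ => eker (K p.2) p.1 :=
        eker_cont2 (hKcont.comp continuous_snd) continuous_fst
      have h3 : Continuous fun p : (ℝ × ℝ) × ℝ => Ifun (K p.2) :=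
        hIcont.comp (hKcont.comp continuous_snd)
      fun_prop
    · filter_upwards with p
      rw [Function.uncurry]
      simp only [norm_mul, RCLike.norm_conj, eker_norm, mul_one]
      exact mul_le_mul_of_nonneg_left (hIbound _) (norm_nonneg _)
  -- pointwise identification with the Fourier transform
  have hpt : ∀ k : ℝ × ℝ, ((‖FT (fun y => f y) k‖ ^ 2 : ℝ) : ℂ)
      = c * (Ifun k * (starRingEnd ℂ) (Ifun k)) := by
    intro k
    have h1 : FT (fun y => f y) k = (2 * Real.pi : ℂ)⁻¹ * Ifun k := rfl
    have h2 : ‖(2 * Real.pi : ℂ)‖ = 2 * Real.pi := by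
      rw [show (2 * Real.pi : ℂ) = ((2 * Real.pi : ℝ) : ℂ) by push_cast; ring,
        Complex.norm_real, Real.norm_eq_abs, abs_of_nonneg h02]
    rw [h1, norm_mul, mul_pow, Complex.mul_conj, Complex.normSq_eq_norm_sq, norm_inv, h2, hc]
    push_cast
    rw [zpow_neg, zpow_two]
    ring
  constructor
  · -- main computation
    have main : (∫ x : ℝ × ℝ, (starRingEnd ℂ) (projOmega Ω (fun y => f y) x) * f x)
        = c * ∫ φ in Set.Ioc (0:ℝ) (2 * Real.pi), Ifun (K φ) * (starRingEnd ℂ) (Ifun (K φ)) := by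
      calc (∫ x : ℝ × ℝ, (starRingEnd ℂ) (projOmega Ω (fun y => f y) x) * f x)
          = ∫ x : ℝ × ℝ, c * ((∫ φ in Set.Ioc (0:ℝ) (2 * Real.pi),
              eker (K φ) x * (starRingEnd ℂ) (Ifun (K φ))) * f x) := by
            congr 1; ext x
            rw [step1 x, inner_eq x, mul_assoc]
        _ = c * ∫ x : ℝ × ℝ, (∫ φ in Set.Ioc (0:ℝ) (2 * Real.pi),
              eker (K φ) x * (starRingEnd ℂ) (Ifun (K φ))) * f x := integral_const_mul _ _
        _ = c * ∫ x : ℝ × ℝ, ∫ φ in Set.Ioc (0:ℝ) (2 * Real.pi),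
              f x * eker (K φ) x * (starRingEnd ℂ) (Ifun (K φ)) := by
            congr 1; congr 1; ext x
            rw [← integral_mul_const]
            congr 1; ext φ; ring
        _ = c * ∫ φ in Set.Ioc (0:ℝ) (2 * Real.pi), ∫ x : ℝ × ℝ,
              f x * eker (K φ) x * (starRingEnd ℂ) (Ifun (K φ)) := by
            rw [integral_integral_swap hint2]
        _ = c * ∫ φ in Set.Ioc (0:ℝ) (2 * Real.pi), Ifun (K φ) * (starRingEnd ℂ) (Ifun (K φ)) := by
            congr 1; congr 1; ext φ
            rw [integral_mul_const]
            congr 1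
            rw [hIfun]
            congr 1; ext x; ring
    rw [main, ← intervalIntegral.integral_ofReal, intervalIntegral.integral_of_le h02,
      ← integral_const_mul]
    congr 1; ext φ
    exact (hpt (K φ)).symm
  · apply intervalIntegral.integral_nonneg h02
    intro φ _
    positivity
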